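/- Let wu be a minimal Duval extension of w, i.e. wu is a nontrivial Duval extension of w and |u| ≤ |u'| for every nonempty word u' such that wu' is a nontrivial Duval extension of w. Then u occurs as a factor of w. -/

import Mathlib

open List

variable {A : Type*}

/-- `u` is a border of `w`: `u` is nonempty, a prefix of `w`, and a suffix of `w`
(in particular every nonempty word is a border of itself). -/
def IsBorder (u w : List A) : Prop :=
  u ≠ [] ∧ u <+: w ∧ u <:+ w

/-- `w` is bordered if it has a border strictly shorter than itself. -/
def Bordered (w : List A) : Prop :=
  ∃ u, IsBorder u w ∧ u.length < w.length

/-- `w` is unbordered if it is not bordered. -/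
def Unbordered (w : List A) : Prop := ¬ Bordered w

/-- The (minimum) period `∂(w)` of a word `w`: the least positive `p ≤ |w|` such that
the letter at position `i` equals the letter at position `i + p` whenever both exist. -/
noncomputable def period (w : List A) : ℕ :=
  sInf {p | 0 < p ∧ p ≤ w.length ∧ ∀ i, i + p < w.length → w[i]? = w[i + p]?}

/-- `μ(w)`: the maximum length of an unbordered factor of `w`. -/
noncomputable def mu (w : List A) : ℕ :=
  sSup {n | ∃ v : List A, v.length = n ∧ v <:+: w ∧ Unbordered v}

namespace DuvalAux

lemma suffix_append_right {l₁ l₂ : List A} (l₃ : List A) (h : l₁ <:+ l₂) :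
    l₁ ++ l₃ <:+ l₂ ++ l₃ := by
  obtain ⟨t, rfl⟩ := h
  exact ⟨t, (List.append_assoc _ _ _).symm⟩

lemma prefix_append_left (l : List A) {l₁ l₂ : List A} (h : l₁ <+: l₂) :
    l ++ l₁ <+: l ++ l₂ := by
  obtain ⟨t, rfl⟩ := h
  exact ⟨t, by simp⟩

lemma unbordered_singleton (c : A) : Unbordered [c] := by
  rintro ⟨b, ⟨hne, _, _⟩, hlt⟩
  simp only [List.length_singleton, Nat.lt_one_iff] at hlt
  exact hne (List.length_eq_zero_iff.mp hlt)

lemma muSet_bddAbove (y : List A) :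
    BddAbove {n | ∃ v : List A, v.length = n ∧ v <:+: y ∧ Unbordered v} := by
  refine ⟨y.length, ?_⟩
  rintro n ⟨v, rfl, hv, _⟩
  exact hv.length_le

lemma le_mu {y v : List A} (hv : v <:+: y) (hub : Unbordered v) : v.length ≤ mu y :=
  le_csSup (muSet_bddAbove y) ⟨v, rfl, hv, hub⟩

lemma bordered_of_long {y v : List A} {N : ℕ} (hmu : mu y = N) (hv : v <:+: y)
    (hN : N < v.length) : Bordered v := by
  by_contra h
  have := le_mu hv h
  omega

lemma mu_eq_of {y : List A} {N : ℕ} (v : List A) (hv : v <:+: y) (hub : Unbordered v)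
    (hlen : v.length = N) (hbd : ∀ v' : List A, v' <:+: y → Unbordered v' → v'.length ≤ N) :
    mu y = N := by
  refine le_antisymm ?_ (hlen ▸ le_mu hv hub)
  have hne : {n | ∃ v : List A, v.length = n ∧ v <:+: y ∧ Unbordered v}.Nonempty :=
    ⟨N, v, hlen, hv, hub⟩
  apply csSup_le hne
  rintro n ⟨v', rfl, hv', hub'⟩
  exact hbd v' hv' hub'

lemma prefix_append_self_iff {w v : List A} :
    v <+: w ++ v ↔ ∀ i, i + w.length < (w ++ v).length → (w ++ v)[i]? = (w ++ v)[i + w.length]? := by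
  constructor
  · rintro ⟨t, ht⟩ i hi
    simp only [List.length_append] at hi
    have hiv : i < v.length := by omega
    have h1 : (w ++ v)[i + w.length]? = v[i]? := by
      rw [List.getElem?_append_right (by omega)]
      congr 1; omega
    have h2 : (w ++ v)[i]? = v[i]? := by
      rw [← ht, List.getElem?_append_left hiv]
    rw [h1, h2]
  · intro h
    rw [List.prefix_iff_eq_take]
    apply List.ext_getElem?
    intro i
    rw [List.getElem?_take]
    by_cases hiv : i < v.length
    · rw [if_pos hiv]
      have := h i (by simp; omega)
      rw [this, List.getElem?_append_right (by omega)]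
      congr 1; omega
    · rw [if_neg hiv, List.getElem?_eq_none (by omega)]

lemma bordered_of_small_period {w : List A} (v : List A) {p : ℕ} (hp0 : 0 < p)
    (hpn : p < w.length)
    (hper : ∀ i, i + p < (w ++ v).length → (w ++ v)[i]? = (w ++ v)[i + p]?) :
    Bordered w := by
  refine ⟨w.drop p, ⟨?_, ?_, List.drop_suffix p w⟩, ?_⟩
  · simp only [ne_eq, List.drop_eq_nil_iff, not_le]
    omega
  · rw [List.prefix_iff_eq_take]
    apply List.ext_getElem?
    intro j
    rw [List.getElem?_drop, List.getElem?_take]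
    have hlen : (w.drop p).length = w.length - p := by simp
    by_cases hj : j < w.length - p
    · rw [if_pos (by omega : j < (w.drop p).length)]
      have := hper j (by simp; omega)
      rw [List.getElem?_append_left (by omega : j < w.length),
        List.getElem?_append_left (by omega : j + p < w.length)] at this
      rw [this]
      congr 1
      omega
    · rw [if_neg (by omega : ¬ j < (w.drop p).length),
        List.getElem?_eq_none (by omega : w.length ≤ p + j)]
  · simp; omega

lemma period_append_eq_iff {w : List A} (hw : Unbordered w) (hne : w ≠ []) (v : List A) :
    period (w ++ v) = w.length ↔ v <+: w ++ v := by
  set S := {p | 0 < p ∧ p ≤ (w ++ v).length ∧ ∀ i, i + p < (w ++ v).length → (w ++ v)[i]? = (w ++ v)[i + p]?} with hS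
  have hlenmem : (w ++ v).length ∈ S := by
    refine ⟨by simp [List.length_pos_iff, hne], le_refl _, fun i h => absurd h (by omega)⟩
  have hSne : S.Nonempty := ⟨_, hlenmem⟩
  have hlb : ∀ p ∈ S, w.length ≤ p := by
    rintro p ⟨hp0, _, hper⟩
    by_contra hlt
    exact hw (bordered_of_small_period v hp0 (by omega) hper)
  constructor
  · intro h
    have hmem : period (w ++ v) ∈ S := Nat.sInf_mem hSne
    rw [h] at hmem
    rw [prefix_append_self_iff]
    exact hmem.2.2
  · intro h
    have hmem : w.length ∈ S := by
      refine ⟨by simp [List.length_pos_iff, hne], by simp, ?_⟩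
      exact (prefix_append_self_iff).mp h
    have h1 : period (w ++ v) ≤ w.length := Nat.sInf_le hmem
    have h2 : w.length ≤ period (w ++ v) := hlb _ (Nat.sInf_mem hSne)
    omega



lemma bordered_of_take_suffix {z : List A} {i : ℕ} (hi0 : 0 < i) (hilt : i < z.length)
    (hsuf : z.take i <:+ z) : Bordered z := by
  refine ⟨z.take i, ⟨?_, List.take_prefix i z, hsuf⟩, ?_⟩
  · intro h
    have h0 : i ⊓ z.length = 0 := by
      rw [← List.length_take, h]
      rfl
    omega
  · rw [List.length_take]
    omega

lemma exists_min_border {z : List A} (hz : Bordered z) :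
    ∃ i, 0 < i ∧ i < z.length ∧ z.take i <:+ z ∧ Unbordered (z.take i) ∧
      ∀ j, 0 < j → j < i → ¬ (z.take j <:+ z) := by
  set S := {i | 0 < i ∧ i < z.length ∧ z.take i <:+ z} with hS
  obtain ⟨b, ⟨hbne, hbpre, hbsuf⟩, hblt⟩ := hz
  have hbmem : b.length ∈ S := by
    refine ⟨List.length_pos_iff.mpr hbne, hblt, ?_⟩
    rw [← List.prefix_iff_eq_take.mp hbpre]
    exact hbsuf
  have hSne : S.Nonempty := ⟨_, hbmem⟩
  obtain ⟨hi0, hilt, hisuf⟩ := Nat.sInf_mem hSne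
  refine ⟨sInf S, hi0, hilt, hisuf, ?_, ?_⟩
  · rintro ⟨c, ⟨hcne, hcpre, hcsuf⟩, hclt⟩
    have hcz : c <+: z := hcpre.trans (List.take_prefix _ z)
    have hczs : c <:+ z := hcsuf.trans hisuf
    have hlen : (z.take (sInf S)).length = sInf S := by simp; omega
    have hcmem : c.length ∈ S := by
      refine ⟨List.length_pos_iff.mpr hcne, by omega, ?_⟩
      rw [← List.prefix_iff_eq_take.mp hcz]
      exact hczs
    have := Nat.sInf_le hcmem
    omega
  · intro j hj0 hjlt hjsuf
    have hjmem : j ∈ S := ⟨hj0, by omega, hjsuf⟩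
    have := Nat.sInf_le hjmem
    omega

lemma bordered_of_overlap {z b : List A} (hpre : b <+: z) (hsuf : b <:+ z)
    (h2 : z.length < 2 * b.length) (hlt : b.length < z.length) : Bordered b := by
  set i := b.length with hi
  set L := z.length with hL
  have hbtake : b = z.take i := List.prefix_iff_eq_take.mp hpre
  have hbdrop : b = z.drop (L - i) := List.suffix_iff_eq_drop.mp hsuf
  refine ⟨b.take (i - (L - i)), ⟨?_, List.take_prefix _ b, ?_⟩, ?_⟩
  · intro h
    have := congrArg List.length h
    simp only [List.length_take, List.length_nil] at this
    omega
  · -- b.take (i - (L - i)) = b.drop (L - i), which is a suffix of b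
    have key : b.drop (L - i) = b.take (i - (L - i)) := by
      conv_lhs => rw [hbtake]
      rw [List.drop_take]
      conv_lhs => rw [← hbdrop]
    rw [← key]
    exact List.drop_suffix _ b
  · simp
    omega



lemma core (w u : List A) (a : A) (m : ℕ)
    (hm1 : 1 ≤ m) (hmn : m ≤ w.length)
    (hulen : u.length = m)
    (hudef : u = w.take (m - 1) ++ [a])
    (ha : w[m - 1]? ≠ some a)
    (hbord : ∀ v : List A, v <:+: w ++ u → w.length < v.length → Bordered v) :
    u <:+: w := by
  set n := w.length with hn
  have hxlen : (w.take (m - 1)).length = m - 1 := by rw [List.length_take]; omega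
  have hualast : u[m - 1]? = some a := by
    rw [hudef, List.getElem?_append_right hxlen.le, hxlen]
    simp
  have hutake : ∀ j ≤ m - 1, u.take j = w.take j := by
    intro j hj
    rw [hudef, List.take_append_of_le_length (by omega), List.take_take]
    congr 1
    omega
  set z : ℕ → List A := fun k => w.drop (m - k) ++ u with hz
  have hdroplen : ∀ k, (w.drop (m - k)).length = n - (m - k) := by
    intro k
    rw [List.length_drop]
  have hzlen : ∀ k ≤ m, (z k).length = n + k := by
    intro k hk
    simp only [hz, List.length_append, List.length_drop, hulen]
    omega
  have hzsuffix : ∀ k, z k <:+ w ++ u := fun k => suffix_append_right u (List.drop_suffix _ w)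
  have hzbord : ∀ k, 1 ≤ k → k ≤ m → Bordered (z k) := fun k h1 h2 =>
    hbord _ (hzsuffix k).isInfix (by rw [hzlen k h2]; omega)
  set Q : ℕ → ℕ → Prop := fun k i => u.drop (m - i) = ((w ++ w).drop (m - k)).take i with hQdef
  -- prefix identity
  have hpref : ∀ k i, 1 ≤ k → k ≤ m → i ≤ n → (z k).take i = ((w ++ w).drop (m - k)).take i := by
    intro k i hk1 hkm hin
    have hd : (w ++ w).drop (m - k) = w.drop (m - k) ++ w :=
      List.drop_append_of_le_length (by omega)
    simp only [hz, hd, List.take_append]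
    congr 1
    rw [hdroplen k]
    exact hutake _ (by omega)
  -- suffix identity
  have hsufval : ∀ k i, k ≤ m → i ≤ m → (z k).drop ((z k).length - i) = u.drop (m - i) := by
    intro k i hk hi
    have he : (z k).length - i = (w.drop (m - k)).length + (m - i) := by
      rw [hzlen k hk, hdroplen k]
      omega
    rw [he]
    simp only [hz]
    rw [List.drop_length_add_append]
  -- border of z k of length i iff Q k i
  have hQ_iff : ∀ k i, 1 ≤ k → k ≤ m → 0 < i → i ≤ m → ((z k).take i <:+ z k ↔ Q k i) := by
    intro k i hk1 hkm hi0 him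
    have hlen_take : ((z k).take i).length = i := by
      rw [List.length_take, hzlen k hkm]
      omega
    constructor
    · intro hsuf
      have h1 := List.suffix_iff_eq_drop.mp hsuf
      rw [hlen_take] at h1
      have h2 := hsufval k i hkm him
      simp only [hQdef]
      rw [← h2, ← h1, hpref k i hk1 hkm (by omega)]
    · intro hQ
      rw [List.suffix_iff_eq_drop, hlen_take, hsufval k i hkm him,
        hpref k i hk1 hkm (by omega)]
      exact hQ.symm
  -- no border of z i of length exactly i (for i < m)
  have hQii : ∀ i, 0 < i → i < m → ¬ Q i i := by
    intro i hi0 him hQ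
    have key : u[m - 1]? = (w ++ w)[m - 1]? := by
      have h1 : u[m - 1]? = (u.drop (m - i))[i - 1]? := by
        rw [List.getElem?_drop]
        congr 1
        omega
      have h2 : (w ++ w)[m - 1]? = (((w ++ w).drop (m - i)).take i)[i - 1]? := by
        rw [List.getElem?_take, if_pos (by omega : i - 1 < i), List.getElem?_drop]
        congr 1
        omega
      rw [h1, h2, hQ]
    rw [hualast, List.getElem?_append_left (by omega : m - 1 < w.length)] at key
    exact ha key.symm
  -- Claim A
  have hA : ∀ k i, 1 ≤ k → k ≤ m → 0 < i → i < m → Q k i →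
      (∀ j, 0 < j → j < i → ¬ Q k j) → ∀ h, 0 < h → h ≤ i → ¬ Q i h := by
    intro k i hk1 hkm hi0 him hQki hmin h h0 hhi hQih
    by_cases hhe : h = i
    · rw [hhe] at hQih
      exact hQii i hi0 him hQih
    · have hhlt : h < i := by omega
      have hE23 : ((w ++ w).drop (m - i)).take h = (u.drop (m - i)).take h := by
        have h1 : (w ++ w).drop (m - i) = w.drop (m - i) ++ w :=
          List.drop_append_of_le_length (by omega)
        have h2 : u.drop (m - i) = (w.take (m - 1)).drop (m - i) ++ [a] := by
          rw [hudef]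
          exact List.drop_append_of_le_length (by rw [hxlen]; omega)
        have h3 : (w.take (m - 1)).drop (m - i) = (w.drop (m - i)).take (m - 1 - (m - i)) :=
          List.drop_take
        rw [h1, h2, List.take_append_of_le_length (by rw [hdroplen i]; omega),
          List.take_append_of_le_length (by rw [List.length_drop, hxlen]; omega), h3,
          List.take_take]
        congr 1
        omega
      have hE4 : (u.drop (m - i)).take h = ((w ++ w).drop (m - k)).take h := by
        have := hQki
        simp only [hQdef] at this
        rw [this, List.take_take]
        congr 1
        omega
      apply hmin h h0 hhlt
      simp only [hQdef] at hQih ⊢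
      rw [hQih, hE23, hE4]
  -- extraction
  have hextract : ∀ k, 1 ≤ k → k ≤ m → ∀ i, m ≤ i → i < n + k → (z k).take i <:+ z k →
      Unbordered ((z k).take i) → u <:+: w := by
    intro k hk1 hkm i hmi hilt hsuf hub
    have hblen : ((z k).take i).length = i := by
      rw [List.length_take, hzlen k hkm]
      omega
    have hbpre : (z k).take i <+: z k := List.take_prefix _ _
    have hbinf : (z k).take i <:+: w ++ u := hbpre.isInfix.trans (hzsuffix k).isInfix
    have hilen : i ≤ n := by
      by_contra hc
      exact hub (hbord _ hbinf (by rw [hblen]; omega))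
    have h2i : 2 * i ≤ n + k := by
      by_contra hc
      refine hub (bordered_of_overlap hbpre hsuf ?_ ?_) <;> rw [hblen, hzlen k hkm] <;> omega
    have hio : i ≤ (w.drop (m - k)).length := by
      rw [hdroplen k]
      omega
    have hbw : (z k).take i = (w.drop (m - k)).take i := by
      simp only [hz]
      exact List.take_append_of_le_length hio
    have hbdrop : (z k).take i = (z k).drop ((z k).length - i) := by
      have h1 := List.suffix_iff_eq_drop.mp hsuf
      rw [hblen] at h1
      exact h1
    have hudrop : u = ((z k).take i).drop (i - m) := by
      rw [hbdrop, List.drop_drop]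
      have he : ((z k).length - i) + (i - m) = (w.drop (m - k)).length := by
        rw [hzlen k hkm, hdroplen k]
        omega
      rw [he]
      simp only [hz]
      exact List.drop_left.symm
    have husuf : u <:+ (z k).take i := by
      rw [hudrop]
      exact List.drop_suffix _ _
    have hbinw : (z k).take i <:+: w := by
      rw [hbw]
      exact (List.take_prefix _ _).isInfix.trans (List.drop_suffix _ w).isInfix
    exact husuf.isInfix.trans hbinw
  -- main chain
  obtain ⟨i0, hi00, hi0lt, hi0suf, hi0ub, hi0min⟩ := exists_min_border (hzbord m hm1 le_rfl)
  rw [hzlen m le_rfl] at hi0lt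
  by_cases hm0 : m ≤ i0
  · exact hextract m hm1 le_rfl i0 hm0 hi0lt hi0suf hi0ub
  · push_neg at hm0
    have hQm : Q m i0 := (hQ_iff m i0 hm1 le_rfl hi00 (by omega)).mp hi0suf
    have hminQ : ∀ j, 0 < j → j < i0 → ¬ Q m j := by
      intro j hj0 hji hQ
      exact hi0min j hj0 (by omega) ((hQ_iff m j hm1 le_rfl hj0 (by omega)).mpr hQ)
    have hnext := hA m i0 hm1 le_rfl hi00 hm0 hQm hminQ
    have loop : ∀ d k, 1 ≤ k → k < m → (∀ h, 0 < h → h ≤ k → ¬ Q k h) → m - k ≤ d →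
        u <:+: w := by
      intro d
      induction d with
      | zero => intro k _ hkm _ hd; omega
      | succ d ih =>
        intro k hk1 hkm hexcl hd
        obtain ⟨i, hi0', hilt, hisuf, hiub, himin⟩ :=
          exists_min_border (hzbord k hk1 (le_of_lt hkm))
        rw [hzlen k (le_of_lt hkm)] at hilt
        by_cases hmi : m ≤ i
        · exact hextract k hk1 (le_of_lt hkm) i hmi hilt hisuf hiub
        · push_neg at hmi
          have hQki : Q k i := (hQ_iff k i hk1 (le_of_lt hkm) hi0' (by omega)).mp hisuf
          have hki : k < i := by
            by_contra hc
            exact hexcl i hi0' (by omega) hQki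
          have hminQk : ∀ j, 0 < j → j < i → ¬ Q k j := fun j hj0 hji hQ =>
            himin j hj0 (by omega)
              ((hQ_iff k j hk1 (le_of_lt hkm) hj0 (by omega)).mpr hQ)
          exact ih i hi0' hmi (hA k i hk1 (le_of_lt hkm) hi0' hmi hQki hminQk) (by omega)
    exact loop (m - i0) i0 hi00 hm0 hnext le_rfl

end DuvalAux

/-- Theorem: if `w ++ u` is a minimal nontrivial Duval extension of `w`
(no shorter nonempty `u'` gives a nontrivial Duval extension), then `u`
occurs as a factor of `w`. -/
theorem minimal_duval_extension_infix [Nontrivial A] (w u : List A)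
    (hw : Unbordered w) (hu : u ≠ [])
    (hduval : mu (w ++ u) = w.length)
    (hnontrivial : period (w ++ u) ≠ w.length)
    (hmin : ∀ u' : List A, u' ≠ [] → mu (w ++ u') = w.length →
      period (w ++ u') ≠ w.length → u.length ≤ u'.length) :
    u <:+: w := by
  classical
  have hm1 : 1 ≤ u.length := List.length_pos_iff.mpr hu
  have hwne : w ≠ [] := by
    intro h
    subst h
    rw [List.nil_append] at hduval
    have h1 : (1:ℕ) ≤ mu u := by
      have hpre : [u.head hu] <+: u := ⟨u.tail, by rw [List.singleton_append, List.cons_head_tail]⟩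
      have h2 := DuvalAux.le_mu hpre.isInfix (DuvalAux.unbordered_singleton (u.head hu))
      simpa using h2
    simp at hduval
    omega
  have hn1 : 1 ≤ w.length := List.length_pos_iff.mpr hwne
  have hbordAll : ∀ v : List A, v <:+: w ++ u → w.length < v.length → Bordered v :=
    fun v hv hl => DuvalAux.bordered_of_long hduval hv hl
  have hnotpref : ¬ u <+: w ++ u := fun h =>
    hnontrivial ((DuvalAux.period_append_eq_iff hw hwne u).mpr h)
  have hsplit : u.dropLast ++ [u.getLast hu] = u := List.dropLast_append_getLast hu
  have hdllen : u.dropLast.length = u.length - 1 := List.length_dropLast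
  have hwuext : w ++ u.dropLast <+: w ++ u := by
    refine ⟨[u.getLast hu], ?_⟩
    rw [List.append_assoc, hsplit]
  have hu'pre : u.dropLast <+: w ++ u.dropLast := by
    rcases eq_or_ne u.dropLast [] with he | hne
    · rw [he]
      exact List.nil_prefix
    · by_contra hnp
      have hmu' : mu (w ++ u.dropLast) = w.length := by
        refine DuvalAux.mu_eq_of w (List.prefix_append _ _).isInfix hw rfl ?_
        intro v hv hubv
        have h2 : v <:+: w ++ u := hv.trans hwuext.isInfix
        have h3 := DuvalAux.le_mu h2 hubv
        rw [hduval] at h3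
        exact h3
      have hper : period (w ++ u.dropLast) ≠ w.length := fun h =>
        hnp ((DuvalAux.period_append_eq_iff hw hwne _).mp h)
      have hge := hmin u.dropLast hne hmu' hper
      have hne1 : 1 ≤ u.dropLast.length := List.length_pos_iff.mpr hne
      omega
  have hmn : u.length ≤ w.length := by
    by_contra hc
    push_neg at hc
    set q := u.drop w.length with hqdef
    have hteq : u.dropLast = (w ++ u.dropLast).take (u.length - 1) := by
      rw [← hdllen]
      exact List.prefix_iff_eq_take.mp hu'pre
    have htake : u.take w.length = w := by
      have h1 : u.dropLast.take w.length = w := by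
        rw [hteq, List.take_take, min_eq_left (by omega),
          List.take_append_of_le_length (le_refl _), List.take_length]
      rw [← hsplit, List.take_append_of_le_length (by omega), h1]
    have hq : u = w ++ q := by
      conv_lhs => rw [← List.take_append_drop w.length u, htake]
    have hqlen : q.length = u.length - w.length := by
      rw [hqdef, List.length_drop]
    have hqne : q ≠ [] := by
      intro h
      have h2 := congrArg List.length h
      rw [hqlen] at h2
      simp at h2
      omega
    have hws : w ++ q <:+ w ++ u := by
      refine ⟨w, ?_⟩
      conv_rhs => rw [hq]
    have hmu' : mu (w ++ q) = w.length := by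
      refine DuvalAux.mu_eq_of w (List.prefix_append _ _).isInfix hw rfl ?_
      intro v hv hubv
      have h2 : v <:+: w ++ u := hv.trans hws.isInfix
      have h3 := DuvalAux.le_mu h2 hubv
      rw [hduval] at h3
      exact h3
    have hper : period (w ++ q) ≠ w.length := by
      intro h
      have hqp : q <+: w ++ q := (DuvalAux.period_append_eq_iff hw hwne _).mp h
      apply hnotpref
      rw [hq]
      exact DuvalAux.prefix_append_left w hqp
    have hge := hmin _ hqne hmu' hper
    omega
  have hdl : u.dropLast = w.take (u.length - 1) := by
    have h1 := List.prefix_iff_eq_take.mp hu'pre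
    rw [hdllen] at h1
    rw [h1, List.take_append_of_le_length (by omega)]
  have hudef : u = w.take (u.length - 1) ++ [u.getLast hu] := by
    rw [← hdl, hsplit]
  have ha : w[u.length - 1]? ≠ some (u.getLast hu) := by
    intro h
    apply hnotpref
    have h2 : w.take (u.length - 1 + 1) = w.take (u.length - 1) ++ [u.getLast hu] := by
      rw [List.take_succ, h]
      rfl
    have hps : u <+: w := by
      rw [hudef, ← h2]
      exact List.take_prefix _ _
    exact hps.trans (List.prefix_append _ _)
  exact DuvalAux.core w u (u.getLast hu) u.length hm1 hmn rfl hudef ha hbordAll
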